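/- Let ξ ∈ ℝ³ be nonzero and let f ∈ L¹(ℝ³; ℂ). Define g : ℝ → ℂ by g(t) = ∫_{ℝ³} f(p) e^{−2πi(ξ·v(p))t} d³p. If there exist constants C > 0 and a > 0 such that |g(t)| ≤ C e^{−a|t|} for all t ∈ ℝ, then g(t) = 0 for every t ∈ ℝ. (In particular, no nontrivial spatial Fourier mode of the linearized relativistic Vlasov–Poisson system whose decay as t → −∞ matches its decay as t → +∞ can decay exponentially; this is the content of Theorems 1 and 3 of the paper.) -/

import Mathlib

open MeasureTheory Real Filter Complex FourierTransform

/-- The relativistic velocity `v(p) = p / √(1+|p|²)` (units with `c = m = 1`). -/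
noncomputable def relVel (p : EuclideanSpace ℝ (Fin 3)) : EuclideanSpace ℝ (Fin 3) :=
  (Real.sqrt (1 + ‖p‖ ^ 2))⁻¹ • p

lemma integrable_exp_neg_mul_abs' {a : ℝ} (ha : 0 < a) :
    Integrable (fun t : ℝ => Real.exp (-a * |t|)) := by
  have h1 : IntegrableOn (fun t : ℝ => Real.exp (-a * |t|)) (Set.Ioi 0) := by
    refine ((exp_neg_integrableOn_Ioi 0 ha).congr_fun ?_ measurableSet_Ioi)
    intro x hx
    simp [abs_of_pos (Set.mem_Ioi.mp hx)]
  have h2 : IntegrableOn (fun t : ℝ => Real.exp (-a * |t|)) (Set.Iio 0) := by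
    rw [← (Measure.measurePreserving_neg (volume : Measure ℝ)).integrableOn_comp_preimage
        (Homeomorph.neg ℝ).measurableEmbedding]
    simpa [Function.comp_def] using h1
  rw [← integrableOn_univ, ← Set.Iio_union_Ici (a := (0:ℝ)), integrableOn_union,
    integrableOn_Ici_iff_integrableOn_Ioi]
  exact ⟨h2, h1⟩

set_option maxHeartbeats 2000000 in
theorem no_exponential_decay_of_modes
    (ξ : EuclideanSpace ℝ (Fin 3)) (hξ : ξ ≠ 0)
    (f : EuclideanSpace ℝ (Fin 3) → ℂ) (hf : Integrable f)
    (g : ℝ → ℂ)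
    (hg : ∀ t : ℝ, g t =
      ∫ p : EuclideanSpace ℝ (Fin 3),
        f p * Complex.exp (-2 * (Real.pi : ℂ) * Complex.I *
          ((inner ℝ ξ (relVel p) : ℝ) : ℂ) * (t : ℂ)))
    (C a : ℝ) (hC : 0 < C) (ha : 0 < a)
    (hdecay : ∀ t : ℝ, ‖g t‖ ≤ C * Real.exp (-a * |t|)) :
    ∀ t : ℝ, g t = 0 := by
  classical
  set σ : EuclideanSpace ℝ (Fin 3) → ℝ := fun p => (inner ℝ ξ (relVel p) : ℝ) with hσdef
  have hrv : Continuous relVel := by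
    apply Continuous.smul (f := fun p : EuclideanSpace ℝ (Fin 3) => (Real.sqrt (1 + ‖p‖ ^ 2))⁻¹) (g := fun p => p)
    · refine Continuous.inv₀ (Real.continuous_sqrt.comp
        (continuous_const.add (continuous_norm.pow 2))) fun p => ?_
      exact (Real.sqrt_pos.mpr (by positivity)).ne'
    · exact continuous_id
  have hσcont : Continuous σ := continuous_const.inner hrv
  have hσb : ∀ p, |σ p| ≤ ‖ξ‖ := by
    intro p
    have hrvnorm : ‖relVel p‖ ≤ 1 := by
      rw [relVel, norm_smul, norm_inv, Real.norm_eq_abs,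
        _root_.abs_of_nonneg (Real.sqrt_nonneg _)]
      have h2 : 0 < Real.sqrt (1 + ‖p‖ ^ 2) := Real.sqrt_pos.mpr (by positivity)
      rw [inv_mul_le_iff₀ h2, mul_one]
      nlinarith [Real.sq_sqrt (show (0:ℝ) ≤ 1 + ‖p‖^2 by positivity), norm_nonneg p,
        Real.sqrt_nonneg (1 + ‖p‖^2)]
    calc |σ p| ≤ ‖ξ‖ * ‖relVel p‖ := abs_real_inner_le_norm ξ (relVel p)
      _ ≤ ‖ξ‖ * 1 := by gcongr
      _ = ‖ξ‖ := mul_one _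
  -- reshaped formula for `g`
  have hg2 : ∀ t : ℝ, g t = ∫ p : EuclideanSpace ℝ (Fin 3),
      f p * Complex.exp (((-2 * π * σ p : ℝ) : ℂ) * Complex.I * (t : ℂ)) := by
    intro t
    rw [hg t]
    refine congrArg (integral volume) (funext fun p => ?_)
    congr 1
    congr 1
    simp only [hσdef]
    push_cast
    ring
  have hnormexp : ∀ (r : ℝ) (z : ℂ), ‖Complex.exp ((r : ℂ) * Complex.I * z)‖
      = Real.exp (-(r * z.im)) := by
    intro r z
    rw [Complex.norm_exp]
    congr 1
    simp [Complex.mul_re]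
  have hnorm1 : ∀ (r u : ℝ), ‖Complex.exp ((r : ℂ) * Complex.I * (u : ℂ))‖ = 1 := by
    intro r u
    rw [hnormexp]
    simp
  have hgmeas : ∀ t : ℝ, AEStronglyMeasurable
      (fun p => f p * Complex.exp (((-2 * π * σ p : ℝ) : ℂ) * Complex.I * (t : ℂ)))
      (volume : Measure (EuclideanSpace ℝ (Fin 3))) := by
    intro t
    refine hf.aestronglyMeasurable.mul (Continuous.aestronglyMeasurable ?_)
    exact Complex.continuous_exp.comp
      (((Complex.continuous_ofReal.comp (continuous_const.mul hσcont)).mul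
        continuous_const).mul continuous_const)
  have hgcont : Continuous g := by
    have hgeq : g = fun t : ℝ => ∫ p : EuclideanSpace ℝ (Fin 3),
        f p * Complex.exp (((-2 * π * σ p : ℝ) : ℂ) * Complex.I * (t : ℂ)) := funext hg2
    rw [hgeq, continuous_iff_continuousAt]
    intro t₀
    refine tendsto_integral_filter_of_dominated_convergence (fun p => ‖f p‖)
      (Eventually.of_forall hgmeas) (Eventually.of_forall fun t => Eventually.of_forall fun p => ?_)
      hf.norm (Eventually.of_forall fun p => ?_)
    · rw [norm_mul, hnorm1]
      simp
    · exact (Continuous.tendsto (by continuity) t₀)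
  have hgint : Integrable g :=
    Integrable.mono' ((integrable_exp_neg_mul_abs' ha).const_mul C)
      hgcont.aestronglyMeasurable (Eventually.of_forall hdecay)
  -- the complex extension of the Fourier transform of `g`
  set H : ℂ → ℂ := fun z => ∫ t : ℝ,
    Complex.exp (((-2 * π * t : ℝ) : ℂ) * Complex.I * z) * g t with hHdef
  set S : Set ℂ := {z : ℂ | |z.im| < a / (2 * π)} with hSdef
  have hSopen : IsOpen S := by
    have : S = {z : ℂ | |z.im| < a / (2 * π)} := rfl
    rw [this]
    exact isOpen_lt (continuous_abs.comp Complex.continuous_im) continuous_const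
  have hSconv : Convex ℝ S := by
    have : S = {z : ℂ | -(a / (2*π)) < z.im} ∩ {z : ℂ | z.im < a / (2*π)} := by
      ext z
      simp only [hSdef, Set.mem_setOf_eq, Set.mem_inter_iff, abs_lt]
    rw [this]
    exact (convex_halfSpace_im_gt _).inter (convex_halfSpace_im_lt _)
  have hSreal : ∀ s : ℝ, (s : ℂ) ∈ S := by
    intro s
    simp only [hSdef, Set.mem_setOf_eq, Complex.ofReal_im, abs_zero]
    positivity
  have h2π : (0:ℝ) < 2 * π := by positivity
  have hFnorm : ∀ (z : ℂ) (t : ℝ),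
      ‖Complex.exp (((-2 * π * t : ℝ) : ℂ) * Complex.I * z) * g t‖
        = Real.exp (2 * π * t * z.im) * ‖g t‖ := by
    intro z t
    rw [norm_mul, hnormexp]
    congr 2
    ring
  have hexpbnd : ∀ (b : ℝ) (z : ℂ) (t : ℝ), |z.im| ≤ b →
      Real.exp (2 * π * t * z.im) * ‖g t‖ ≤ C * Real.exp (-(a - 2*π*b) * |t|) := by
    intro b z t hb
    have h1 : 2 * π * t * z.im ≤ 2 * π * |t| * b := by
      calc 2 * π * t * z.im ≤ |2 * π * t * z.im| := le_abs_self _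
        _ = 2 * π * |t| * |z.im| := by
            rw [abs_mul, abs_mul]
            rw [abs_of_pos h2π]
        _ ≤ 2 * π * |t| * b := by
            have : (0:ℝ) ≤ 2 * π * |t| := by positivity
            exact mul_le_mul_of_nonneg_left hb this
    calc Real.exp (2 * π * t * z.im) * ‖g t‖
        ≤ Real.exp (2 * π * |t| * b) * (C * Real.exp (-a * |t|)) := by
          exact mul_le_mul (Real.exp_le_exp.mpr h1) (hdecay t) (norm_nonneg _)
            (Real.exp_pos _).le
      _ = C * Real.exp (-(a - 2*π*b) * |t|) := by
          rw [mul_left_comm, ← Real.exp_add]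
          congr 1
          ring
  have hHdiff : DifferentiableOn ℂ H S := by
    intro z₀ hz₀
    have hz : |z₀.im| < a / (2 * π) := hz₀
    set δ : ℝ := (a / (2 * π) - |z₀.im|) / 2 with hδdef
    have hδpos : 0 < δ := by
      have := hz
      simp only [hδdef]
      linarith
    set c : ℝ := a - 2 * π * (|z₀.im| + δ) with hcdef
    have hcpos : 0 < c := by
      have h' : |z₀.im| + δ < a / (2 * π) := by
        simp only [hδdef]; linarith
      have := (lt_div_iff₀ h2π).mp h'
      simp only [hcdef]
      nlinarith
    have himb : ∀ z : ℂ, z ∈ Metric.ball z₀ δ → |z.im| ≤ |z₀.im| + δ := by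
      intro z hzball
      have h1 : |z.im - z₀.im| ≤ ‖z - z₀‖ := by
        simpa using Complex.abs_im_le_norm (z - z₀)
      have h2 : ‖z - z₀‖ < δ := by
        rw [← dist_eq_norm]
        exact Metric.mem_ball.mp hzball
      have := abs_sub_abs_le_abs_sub z.im z₀.im
      linarith [abs_sub_comm z.im z₀.im]
    have key := hasDerivAt_integral_of_dominated_loc_of_deriv_le (μ := (volume : Measure ℝ))
      (x₀ := z₀) (s := Metric.ball z₀ δ)
      (F := fun z t => Complex.exp (((-2 * π * t : ℝ) : ℂ) * Complex.I * z) * g t)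
      (F' := fun z t => ((-2 * π * t : ℝ) : ℂ) * Complex.I *
        Complex.exp (((-2 * π * t : ℝ) : ℂ) * Complex.I * z) * g t)
      (bound := fun t => 2 * π * C * (2 / c) * Real.exp (-(c/2) * |t|))
      (Metric.ball_mem_nhds z₀ hδpos) ?_ ?_ ?_ ?_ ?_ ?_
    · exact key.2.differentiableAt.differentiableWithinAt
    · -- measurability of F z
      refine Eventually.of_forall fun z => Continuous.aestronglyMeasurable ?_
      refine Continuous.mul ?_ hgcont
      exact Complex.continuous_exp.comp (Continuous.mul (Continuous.mul
        (Complex.continuous_ofReal.comp (continuous_const.mul continuous_id))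
        continuous_const) continuous_const)
    · -- integrability of F z₀
      refine Integrable.mono'
        ((integrable_exp_neg_mul_abs' (a := a - 2*π*(|z₀.im| + δ)) hcpos).const_mul C)
        ?_ (Eventually.of_forall fun t => ?_)
      · refine Continuous.aestronglyMeasurable (Continuous.mul ?_ hgcont)
        exact Complex.continuous_exp.comp (Continuous.mul (Continuous.mul
          (Complex.continuous_ofReal.comp (continuous_const.mul continuous_id))
          continuous_const) continuous_const)
      · rw [hFnorm]
        exact hexpbnd (|z₀.im| + δ) z₀ t (by linarith [le_refl (|z₀.im|)])
    · -- measurability of F' z₀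
      refine Continuous.aestronglyMeasurable ?_
      refine Continuous.mul (Continuous.mul ?_ ?_) hgcont
      · exact Continuous.mul
          (Complex.continuous_ofReal.comp (continuous_const.mul continuous_id)) continuous_const
      · exact Complex.continuous_exp.comp (Continuous.mul (Continuous.mul
          (Complex.continuous_ofReal.comp (continuous_const.mul continuous_id))
          continuous_const) continuous_const)
    · -- bound on F'
      refine Eventually.of_forall fun t => fun z hzball => ?_
      have hzim := himb z hzball
      rw [norm_mul, norm_mul, norm_mul]
      have h1 : ‖((-2 * π * t : ℝ) : ℂ)‖ = 2 * π * |t| := by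
        rw [Complex.norm_real, Real.norm_eq_abs, abs_mul, abs_mul, abs_neg, _root_.abs_two,
          (abs_of_pos Real.pi_pos : |π| = π)]
      have h2 : ‖Complex.I‖ = 1 := by simp
      rw [h1, h2, mul_one]
      have h3 : ‖Complex.exp (((-2 * π * t : ℝ) : ℂ) * Complex.I * z)‖ * ‖g t‖
          ≤ C * Real.exp (-c * |t|) := by
        have := hexpbnd (|z₀.im| + δ) z t hzim
        rw [← hcdef] at this
        calc ‖Complex.exp (((-2 * π * t : ℝ) : ℂ) * Complex.I * z)‖ * ‖g t‖
            = Real.exp (2 * π * t * z.im) * ‖g t‖ := by rw [hnormexp]; congr 2; ring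
          _ ≤ C * Real.exp (-c * |t|) := this
      have h4 : |t| ≤ (2 / c) * Real.exp ((c/2) * |t|) := by
        have hexp := Real.add_one_le_exp ((c/2) * |t|)
        have hc2 : (0:ℝ) < c / 2 := by linarith
        have h5 : (c/2) * |t| ≤ Real.exp ((c/2) * |t|) := by linarith
        calc |t| = (2 / c) * ((c/2) * |t|) := by field_simp
          _ ≤ (2 / c) * Real.exp ((c/2) * |t|) := by
              exact mul_le_mul_of_nonneg_left h5 (by positivity)
      calc 2 * π * |t| * ‖Complex.exp (((-2 * π * t : ℝ) : ℂ) * Complex.I * z)‖ * ‖g t‖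
          = 2 * π * |t| * (‖Complex.exp (((-2 * π * t : ℝ) : ℂ) * Complex.I * z)‖ * ‖g t‖) := by
            ring
        _ ≤ 2 * π * |t| * (C * Real.exp (-c * |t|)) := by
            exact mul_le_mul_of_nonneg_left h3 (by positivity)
        _ ≤ 2 * π * ((2 / c) * Real.exp ((c/2) * |t|)) * (C * Real.exp (-c * |t|)) := by
            have h6 : 2 * π * |t| ≤ 2 * π * ((2 / c) * Real.exp ((c/2) * |t|)) :=
              mul_le_mul_of_nonneg_left h4 (by positivity)
            exact mul_le_mul_of_nonneg_right h6 (by positivity)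
        _ = 2 * π * C * (2 / c) * (Real.exp ((c/2) * |t|) * Real.exp (-c * |t|)) := by ring
        _ = 2 * π * C * (2 / c) * Real.exp (-(c/2) * |t|) := by
            rw [← Real.exp_add]
            congr 1
            ring
    · -- integrability of bound
      exact (integrable_exp_neg_mul_abs' (by linarith : (0:ℝ) < c/2)).const_mul _
    · -- differentiability
      refine Eventually.of_forall fun t => fun z hzball => ?_
      have hd : HasDerivAt (fun w : ℂ => Complex.exp (((-2 * π * t : ℝ) : ℂ) * Complex.I * w))
          (((-2 * π * t : ℝ) : ℂ) * Complex.I *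
            Complex.exp (((-2 * π * t : ℝ) : ℂ) * Complex.I * z)) z := by
        have h0 : HasDerivAt (fun w : ℂ => ((-2 * π * t : ℝ) : ℂ) * Complex.I * w)
            (((-2 * π * t : ℝ) : ℂ) * Complex.I) z := by
          simpa using (hasDerivAt_id z).const_mul (((-2 * π * t : ℝ) : ℂ) * Complex.I)
        have := h0.cexp
        have e : ((-2 * π * t : ℝ) : ℂ) * Complex.I * Complex.exp (((-2 * π * t : ℝ) : ℂ) * Complex.I * z)
            = Complex.exp (((-2 * π * t : ℝ) : ℂ) * Complex.I * z) * (((-2 * π * t : ℝ) : ℂ) * Complex.I) := by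
          ring
        rw [e]
        exact this
      exact hd.mul_const (g t)
  have hHzero : ∀ s : ℝ, ‖ξ‖ < s → H s = 0 := by
    intro s hs
    set d : ℝ := s - ‖ξ‖ with hddef
    have hd : 0 < d := by simp only [hddef]; linarith
    set Φ : ℝ → ℂ := fun ε => ∫ t : ℝ,
      (Real.exp (-ε * t^2) : ℂ) *
        (Complex.exp (((-2 * π * t : ℝ) : ℂ) * Complex.I * (s : ℂ)) * g t) with hΦdef
    have hT1 : Tendsto Φ (nhdsWithin 0 (Set.Ioi 0)) (nhds (H s)) := by
      simp only [hΦdef, hHdef]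
      refine tendsto_integral_filter_of_dominated_convergence (fun t => C * Real.exp (-a * |t|))
        ?_ ?_ ((integrable_exp_neg_mul_abs' ha).const_mul C) ?_
      · refine Eventually.of_forall fun ε => Continuous.aestronglyMeasurable ?_
        refine Continuous.mul ?_ (Continuous.mul ?_ hgcont)
        · exact Complex.continuous_ofReal.comp
            ((continuous_const.mul (continuous_pow 2)).rexp)
        · exact Complex.continuous_exp.comp (Continuous.mul (Continuous.mul
            (Complex.continuous_ofReal.comp (continuous_const.mul continuous_id))
            continuous_const) continuous_const)
      · filter_upwards [self_mem_nhdsWithin] with ε hε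
        refine Eventually.of_forall fun t => ?_
        have hε' : (0:ℝ) < ε := hε
        rw [norm_mul, norm_mul, hnorm1, one_mul, Complex.norm_real, Real.norm_eq_abs,
          _root_.abs_of_pos (Real.exp_pos _)]
        have h1 : Real.exp (-ε * t^2) ≤ 1 := by
          rw [Real.exp_le_one_iff]
          nlinarith [sq_nonneg t]
        calc Real.exp (-ε * t^2) * ‖g t‖ ≤ 1 * (C * Real.exp (-a * |t|)) :=
              mul_le_mul h1 (hdecay t) (norm_nonneg _) one_pos.le
          _ = C * Real.exp (-a * |t|) := one_mul _
      · refine Eventually.of_forall fun t => ?_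
        have hc1 : Continuous (fun ε : ℝ => ((Real.exp (-ε * t^2) : ℝ) : ℂ)) :=
          Complex.continuous_ofReal.comp ((continuous_id.neg.mul continuous_const).rexp)
        have hcont : ContinuousAt (fun ε : ℝ => ((Real.exp (-ε * t^2) : ℝ) : ℂ) *
            (Complex.exp (((-2 * π * t : ℝ) : ℂ) * Complex.I * (s : ℂ)) * g t)) 0 :=
          hc1.continuousAt.mul continuousAt_const
        have := hcont.tendsto.mono_left (nhdsWithin_le_nhds (s := Set.Ioi (0:ℝ)))
        simpa using this
    have hT2 : ∀ ε : ℝ, 0 < ε → Φ ε = ∫ p : EuclideanSpace ℝ (Fin 3),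
        f p * (((π : ℂ) / (ε : ℂ)) ^ (1/2 : ℂ) *
          Complex.exp (-((-2 * π * (σ p + s) : ℝ) : ℂ) ^ 2 / (4 * (ε : ℂ)))) := by
      intro ε hε
      have hFub : Integrable (Function.uncurry fun (t : ℝ) (p : EuclideanSpace ℝ (Fin 3)) =>
          (Real.exp (-ε * t^2) : ℂ) * Complex.exp (((-2 * π * t : ℝ) : ℂ) * Complex.I * (s : ℂ)) *
            (f p * Complex.exp (((-2 * π * σ p : ℝ) : ℂ) * Complex.I * (t : ℂ))))
          ((volume : Measure ℝ).prod (volume : Measure (EuclideanSpace ℝ (Fin 3)))) := by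
        have hbint : Integrable (fun z : ℝ × EuclideanSpace ℝ (Fin 3) =>
            Real.exp (-ε * z.1^2) * ‖f z.2‖) (volume.prod volume) :=
          (integrable_exp_neg_mul_sq hε).mul_prod hf.norm
        refine hbint.mono' ?_ ?_
        · refine AEStronglyMeasurable.mul (AEStronglyMeasurable.mul ?_ ?_)
            (AEStronglyMeasurable.mul (hf.aestronglyMeasurable.comp_snd) ?_)
          · exact Continuous.aestronglyMeasurable (Complex.continuous_ofReal.comp
              ((continuous_const.mul ((continuous_fst).pow 2)).rexp))
          · exact Continuous.aestronglyMeasurable (Complex.continuous_exp.comp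
              (Continuous.mul (Continuous.mul (Complex.continuous_ofReal.comp
                (continuous_const.mul continuous_fst)) continuous_const) continuous_const))
          · exact Continuous.aestronglyMeasurable (Complex.continuous_exp.comp
              (Continuous.mul (Continuous.mul (Complex.continuous_ofReal.comp
                (continuous_const.mul (hσcont.comp continuous_snd))) continuous_const)
                (Complex.continuous_ofReal.comp continuous_fst)))
        · refine Eventually.of_forall fun z => ?_
          obtain ⟨t, p⟩ := z
          simp only [Function.uncurry_apply_pair]
          rw [norm_mul, norm_mul, norm_mul, hnorm1, hnorm1, mul_one, mul_one,
            Complex.norm_real, Real.norm_eq_abs, _root_.abs_of_pos (Real.exp_pos _)]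
      calc Φ ε = ∫ t : ℝ, ∫ p : EuclideanSpace ℝ (Fin 3),
            (Real.exp (-ε * t^2) : ℂ) *
              Complex.exp (((-2 * π * t : ℝ) : ℂ) * Complex.I * (s : ℂ)) *
              (f p * Complex.exp (((-2 * π * σ p : ℝ) : ℂ) * Complex.I * (t : ℂ))) := by
            simp only [hΦdef]
            refine congrArg (integral volume) (funext fun t => ?_)
            rw [hg2 t, ← mul_assoc, ← integral_const_mul]
        _ = ∫ p : EuclideanSpace ℝ (Fin 3), ∫ t : ℝ,
            (Real.exp (-ε * t^2) : ℂ) *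
              Complex.exp (((-2 * π * t : ℝ) : ℂ) * Complex.I * (s : ℂ)) *
              (f p * Complex.exp (((-2 * π * σ p : ℝ) : ℂ) * Complex.I * (t : ℂ))) :=
            integral_integral_swap hFub
        _ = ∫ p : EuclideanSpace ℝ (Fin 3), f p * ∫ t : ℝ,
            Complex.exp (Complex.I * ((-2 * π * (σ p + s) : ℝ) : ℂ) * (t : ℂ)) *
              Complex.exp (-(ε : ℂ) * (t : ℂ) ^ 2) := by
            refine congrArg (integral volume) (funext fun p => ?_)
            rw [← integral_const_mul]
            refine congrArg (integral volume) (funext fun t => ?_)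
            have hkey : ∀ x y u : ℂ, Complex.exp x * Complex.exp y *
                (f p * Complex.exp u) = f p * Complex.exp (x + y + u) := by
              intro x y u
              rw [Complex.exp_add, Complex.exp_add]
              ring
            rw [Complex.ofReal_exp, hkey, ← Complex.exp_add]
            congr 1
            push_cast
            ring
        _ = ∫ p : EuclideanSpace ℝ (Fin 3),
            f p * (((π : ℂ) / (ε : ℂ)) ^ (1/2 : ℂ) *
              Complex.exp (-((-2 * π * (σ p + s) : ℝ) : ℂ) ^ 2 / (4 * (ε : ℂ)))) := by
            refine congrArg (integral volume) (funext fun p => ?_)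
            congr 1
            exact fourierIntegral_gaussian (by simpa using hε) (((-2 * π * (σ p + s) : ℝ) : ℂ))
    have hT3 : ∀ ε : ℝ, 0 < ε → ‖Φ ε‖ ≤ (∫ p : EuclideanSpace ℝ (Fin 3), ‖f p‖) *
        ((π/ε) ^ ((1:ℝ)/2) * Real.exp (-(π^2*d^2)/ε)) := by
      intro ε hε
      rw [hT2 ε hε]
      refine le_trans (norm_integral_le_integral_norm _) ?_
      have hXbound : ∀ p, ‖f p * (((π : ℂ) / (ε : ℂ)) ^ (1/2 : ℂ) *
          Complex.exp (-((-2 * π * (σ p + s) : ℝ) : ℂ) ^ 2 / (4 * (ε : ℂ))))‖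
            ≤ ‖f p‖ * ((π/ε) ^ ((1:ℝ)/2) * Real.exp (-(π^2*d^2)/ε)) := by
        intro p
        rw [norm_mul]
        refine mul_le_mul_of_nonneg_left ?_ (norm_nonneg _)
        rw [norm_mul]
        have h1 : ‖((π : ℂ) / (ε : ℂ)) ^ (1/2 : ℂ)‖ = (π/ε) ^ ((1:ℝ)/2) := by
          rw [show ((π : ℂ) / (ε : ℂ)) = (((π/ε : ℝ)) : ℂ) by push_cast; ring]
          rw [Complex.norm_cpow_eq_rpow_re_of_pos (by positivity)]
          norm_num
        have h2 : ‖Complex.exp (-((-2 * π * (σ p + s) : ℝ) : ℂ) ^ 2 / (4 * (ε : ℂ)))‖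
            ≤ Real.exp (-(π^2*d^2)/ε) := by
          have harg : (-((-2 * π * (σ p + s) : ℝ) : ℂ) ^ 2 / (4 * (ε : ℂ)))
              = (((-(π^2*(σ p + s)^2)/ε : ℝ)) : ℂ) := by
            push_cast
            field_simp
            ring
          rw [harg, ← Complex.ofReal_exp, Complex.norm_real, Real.norm_eq_abs,
            _root_.abs_of_pos (Real.exp_pos _), Real.exp_le_exp]
          have hle : d ≤ σ p + s := by
            have := (abs_le.mp (hσb p)).1
            simp only [hddef]
            linarith
          have hsq : d^2 ≤ (σ p + s)^2 := by nlinarith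
          rw [neg_div, neg_div, neg_le_neg_iff]
          exact (div_le_div_iff_of_pos_right hε).mpr (by nlinarith)
        rw [h1]
        exact mul_le_mul_of_nonneg_left h2 (by positivity)
      refine le_trans (integral_mono_of_nonneg (Eventually.of_forall fun p => norm_nonneg _)
        (hf.norm.mul_const _) (Eventually.of_forall hXbound)) ?_
      rw [integral_mul_const]
    have hT4 : Tendsto (fun ε => (∫ p : EuclideanSpace ℝ (Fin 3), ‖f p‖) *
        ((π/ε) ^ ((1:ℝ)/2) * Real.exp (-(π^2*d^2)/ε))) (nhdsWithin 0 (Set.Ioi 0)) (nhds 0) := by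
      have hb : (0:ℝ) < π^2*d^2 := by positivity
      have h := (tendsto_rpow_mul_exp_neg_mul_atTop_nhds_zero ((1:ℝ)/2) (π^2*d^2) hb).comp
        tendsto_inv_nhdsGT_zero
      have h3 := h.const_mul ((∫ p : EuclideanSpace ℝ (Fin 3), ‖f p‖) * π ^ ((1:ℝ)/2))
      rw [mul_zero] at h3
      refine Tendsto.congr' ?_ h3
      filter_upwards [self_mem_nhdsWithin] with ε hε
      have hε' : (0:ℝ) < ε := hε
      show (∫ p : EuclideanSpace ℝ (Fin 3), ‖f p‖) * π ^ ((1:ℝ)/2) *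
          ((ε⁻¹) ^ ((1:ℝ)/2) * Real.exp (-(π^2*d^2) * ε⁻¹))
        = (∫ p : EuclideanSpace ℝ (Fin 3), ‖f p‖) *
          ((π/ε) ^ ((1:ℝ)/2) * Real.exp (-(π^2*d^2)/ε))
      rw [div_eq_mul_inv π ε, Real.mul_rpow Real.pi_pos.le (inv_nonneg.mpr hε'.le),
        div_eq_mul_inv (-(π^2*d^2)) ε]
      ring
    have hT5 : Tendsto Φ (nhdsWithin 0 (Set.Ioi 0)) (nhds 0) := by
      refine squeeze_zero_norm' ?_ hT4
      filter_upwards [self_mem_nhdsWithin] with ε hε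
      exact hT3 ε hε
    exact tendsto_nhds_unique hT1 hT5
  -- identity theorem
  have hHvanish : Set.EqOn H 0 S := by
    have hA : AnalyticOnNhd ℂ H S := hHdiff.analyticOnNhd hSopen
    refine hA.eqOn_zero_of_preconnected_of_frequently_eq_zero hSconv.isPreconnected
      (hSreal (‖ξ‖ + 1)) ?_
    have hseq : Tendsto (fun n : ℕ => ((‖ξ‖ + 1 + 1/(n+1) : ℝ) : ℂ)) atTop
        (nhdsWithin ((‖ξ‖ + 1 : ℝ) : ℂ) {((‖ξ‖ + 1 : ℝ) : ℂ)}ᶜ) := by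
      rw [tendsto_nhdsWithin_iff]
      constructor
      · have : Tendsto (fun n : ℕ => (‖ξ‖ + 1 + 1/(n+1) : ℝ)) atTop (nhds (‖ξ‖ + 1)) := by
          have h0 : Tendsto (fun n : ℕ => 1/((n:ℝ)+1)) atTop (nhds 0) :=
            tendsto_one_div_add_atTop_nhds_zero_nat
          have := (tendsto_const_nhds (x := (‖ξ‖ + 1 : ℝ)) (f := atTop (α := ℕ))).add h0
          simpa using this
        exact (Complex.continuous_ofReal.tendsto _).comp this
      · refine Eventually.of_forall fun n => ?_
        simp only [Set.mem_compl_iff, Set.mem_singleton_iff]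
        intro hcontra
        have := Complex.ofReal_injective hcontra
        have hpos : (0:ℝ) < 1/((n:ℝ)+1) := by positivity
        linarith
    refine hseq.frequently (Eventually.of_forall fun n => ?_).frequently
    refine hHzero _ ?_
    have hpos : (0:ℝ) < 1/((n:ℝ)+1) := by positivity
    linarith
  -- the Fourier transform of `g` vanishes
  have hFg : 𝓕 g = 0 := by
    funext s
    rw [Real.fourier_real_eq_integral_exp_smul]
    have := hHvanish (hSreal s)
    simp only [hHdef, Pi.zero_apply] at this ⊢
    rw [← this]
    refine congrArg (integral volume) (funext fun t => ?_)
    rw [smul_eq_mul]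
    congr 2
    push_cast
    ring
  -- Fourier inversion
  intro t
  have h1 : Integrable (𝓕 g) := by rw [hFg]; exact integrable_zero _ _ _
  have h2 := hgint.fourierInv_fourier_eq h1 (hgcont.continuousAt (x := t))
  rw [hFg] at h2
  rw [← h2]
  simp [Real.fourierInv_eq]
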